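/- Fix K ∈ ℕ with K ≥ 1, N = 2K+1, L > 0, ε ∈ ℝ, M > 0, dt > 0, and let u¹, v be real-valued grid functions satisfying the mass constraint ∑_s v(s) = ∑_s u¹(s). Set a = 1/dt and define G_N(z) = (1/(2Ma))·‖a·z − a·u¹‖₋₁,N² + 2·E_N((z + u¹)/2) for real-valued grid functions z, and μ_N(y) = y³ + (1−ε)y + 2Δ_N y + Δ_N² y. Then the following are equivalent: (i) v solves the fully discrete midpoint-rule PFC equation (v − u¹)/dt = M·Δ_N(μ_N((v + u¹)/2)) (equality of grid functions); (ii) v is a critical point of G_N along mass-conserving directions, i.e., for every real-valued grid function w with zero mean, the function s ↦ G_N(v + s·w) has derivative 0 at s = 0. -/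

import Mathlib

open Complex

noncomputable section

/-- A grid function on the `N × N` grid with `N = 2K+1`. -/
abbrev GridFn (K : ℕ) := Fin (2 * K + 1) × Fin (2 * K + 1) → ℂ

/-- A grid function is real-valued if all its values are real. -/
def RealValued {K : ℕ} (w : GridFn K) : Prop := ∀ m, (w m).im = 0

/-- A grid function has zero (discrete) mean if its values sum to zero. -/
def ZeroMean {K : ℕ} (w : GridFn K) : Prop := (∑ s, w s) = 0

/-- The discrete Fourier coefficient `ĉ_w(r) = N⁻² ∑_s w(s) exp(−2πi(r₁s₁+r₂s₂)/N)`. -/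
def dft (K : ℕ) (w : GridFn K) (r : ℤ × ℤ) : ℂ :=
  ((2 * K + 1 : ℂ) ^ 2)⁻¹ *
    ∑ s : Fin (2 * K + 1) × Fin (2 * K + 1),
      w s * Complex.exp (-(2 * Real.pi * Complex.I) *
        ((r.1 : ℂ) * ((s.1 : ℕ) : ℂ) + (r.2 : ℂ) * ((s.2 : ℕ) : ℂ)) / (2 * K + 1))

/-- The set of nonzero frequencies `{r ∈ ℤ² : −K ≤ r₁,r₂ ≤ K} \ {0}`. -/
def freqs (K : ℕ) : Finset (ℤ × ℤ) :=
  (Finset.Icc (-(K : ℤ)) K ×ˢ Finset.Icc (-(K : ℤ)) K).erase (0, 0)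

/-- The spectral operator `(−Δ_N)^α` for `α ∈ {−1, 1, 2}` (defined for any `α : ℤ`):
`((−Δ_N)^α w)(m) = ∑_{r ≠ 0} (4π²|r|²/L²)^α ĉ_w(r) exp(2πi r·m/N)`. -/
def specOp (K : ℕ) (L : ℝ) (α : ℤ) (w : GridFn K) : GridFn K := fun m =>
  ∑ r ∈ freqs K,
    (((4 * Real.pi ^ 2 * ((r.1 : ℝ) ^ 2 + (r.2 : ℝ) ^ 2) / L ^ 2 : ℝ) : ℂ)) ^ α *
      dft K w r *
      Complex.exp ((2 * Real.pi * Complex.I) *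
        ((r.1 : ℂ) * ((m.1 : ℕ) : ℂ) + (r.2 : ℂ) * ((m.2 : ℕ) : ℂ)) / (2 * K + 1))

/-- The discrete Laplacian `Δ_N w = −((−Δ_N)¹ w)`. -/
def lapN (K : ℕ) (L : ℝ) (w : GridFn K) : GridFn K := fun m => -(specOp K L 1 w m)

/-- The discrete biharmonic operator `Δ_N² w = (−Δ_N)² w`. -/
def bilapN (K : ℕ) (L : ℝ) (w : GridFn K) : GridFn K := specOp K L 2 w

/-- The discrete inverse (negative) Laplacian `(−Δ_N)⁻¹`. -/
def invNegLapN (K : ℕ) (L : ℝ) (w : GridFn K) : GridFn K := specOp K L (-1) w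

/-- The discrete inner product `(u,v)_N = h² ∑_s u(s) conj(v(s))` with `h = L/N`. -/
def ipN (K : ℕ) (L : ℝ) (u v : GridFn K) : ℂ :=
  (((L / (2 * K + 1)) ^ 2 : ℝ) : ℂ) * ∑ s, u s * (starRingEnd ℂ) (v s)

/-- The spectral partial derivative `D₁` (in the first coordinate direction). -/
def D1 (K : ℕ) (L : ℝ) (w : GridFn K) : GridFn K := fun m =>
  ∑ r ∈ Finset.Icc (-(K : ℤ)) K ×ˢ Finset.Icc (-(K : ℤ)) K,
    (2 * Real.pi * Complex.I * (r.1 : ℂ) / (L : ℂ)) * dft K w r *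
      Complex.exp ((2 * Real.pi * Complex.I) *
        ((r.1 : ℂ) * ((m.1 : ℕ) : ℂ) + (r.2 : ℂ) * ((m.2 : ℕ) : ℂ)) / (2 * K + 1))

/-- The spectral partial derivative `D₂` (in the second coordinate direction). -/
def D2 (K : ℕ) (L : ℝ) (w : GridFn K) : GridFn K := fun m =>
  ∑ r ∈ Finset.Icc (-(K : ℤ)) K ×ˢ Finset.Icc (-(K : ℤ)) K,
    (2 * Real.pi * Complex.I * (r.2 : ℂ) / (L : ℂ)) * dft K w r *
      Complex.exp ((2 * Real.pi * Complex.I) *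
        ((r.1 : ℂ) * ((m.1 : ℕ) : ℂ) + (r.2 : ℂ) * ((m.2 : ℕ) : ℂ)) / (2 * K + 1))

/-- The discrete squared gradient `|∇_N w|²(m) = |(D₁w)(m)|² + |(D₂w)(m)|²`. -/
def gradSqN (K : ℕ) (L : ℝ) (w : GridFn K) (m : Fin (2 * K + 1) × Fin (2 * K + 1)) : ℝ :=
  ‖D1 K L w m‖ ^ 2 + ‖D2 K L w m‖ ^ 2

/-- The discrete PFC energy
`E_N(z) = h² ∑_m [¼z(m)⁴ + ((1−ε)/2)z(m)² − |∇_N z|²(m) + ½|(Δ_N z)(m)|²]`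
of a real-valued grid function `z`. -/
def EN (K : ℕ) (L ε : ℝ) (z : GridFn K) : ℝ :=
  (L / (2 * K + 1)) ^ 2 *
    ∑ m, ((1/4) * (z m).re ^ 4 + ((1 - ε) / 2) * (z m).re ^ 2
      - gradSqN K L z m + (1/2) * ‖lapN K L z m‖ ^ 2)

/-- The squared discrete negative norm `‖w‖₋₁,N² = Re((−Δ_N)⁻¹w, w)_N`. -/
def negNormSq (K : ℕ) (L : ℝ) (w : GridFn K) : ℝ :=
  (ipN K L (invNegLapN K L w) w).re

/-- The discrete PFC chemical potential `μ_N(v) = v³ + (1−ε)v + 2Δ_N v + Δ_N² v`. -/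
def muN (K : ℕ) (L ε : ℝ) (v : GridFn K) : GridFn K := fun m =>
  (v m) ^ 3 + ((1 - ε : ℝ) : ℂ) * v m + 2 * lapN K L v m + bilapN K L v m

/-- The midpoint-rule objective
`G_N(z) = (1/(2Ma))‖a z − a u¹‖₋₁,N² + 2 E_N((z + u¹)/2)` with `a = 1/dt`. -/
def GNmp (K : ℕ) (L ε M a : ℝ) (u1 : GridFn K) (z : GridFn K) : ℝ :=
  (1 / (2 * M * a)) * negNormSq K L (fun m => (a : ℂ) * z m - (a : ℂ) * u1 m)
    + 2 * EN K L ε (fun m => (z m + u1 m) / 2)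

namespace PFC

/-- The basic character. -/
def ec (K : ℕ) (r : ℤ × ℤ) (m : Fin (2*K+1) × Fin (2*K+1)) : ℂ :=
  Complex.exp ((2 * Real.pi * Complex.I) *
    ((r.1 : ℂ) * ((m.1 : ℕ) : ℂ) + (r.2 : ℂ) * ((m.2 : ℕ) : ℂ)) / (2 * K + 1))

variable {K : ℕ}

lemma ec_mul (r r' : ℤ × ℤ) (m) : ec K r m * ec K r' m = ec K (r + r') m := by
  rw [ec, ec, ec, ← Complex.exp_add]
  congr 1
  push_cast [Prod.fst_add, Prod.snd_add]
  ring

lemma ec_zero (m) : ec K (0, 0) m = 1 := by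
  simp [ec]

lemma ec_conj (r : ℤ × ℤ) (m) : (starRingEnd ℂ) (ec K r m) = ec K (-r) m := by
  rw [ec, ec, ← Complex.exp_conj]
  congr 1
  simp only [map_mul, map_div₀, map_add, Complex.conj_I, Complex.conj_ofReal, map_ofNat,
    map_one, map_intCast, map_natCast]
  push_cast [Prod.fst_neg, Prod.snd_neg]
  ring

lemma ec_ne_zero (r : ℤ × ℤ) (m) : ec K r m ≠ 0 := Complex.exp_ne_zero _

lemma NC_ne_zero : (2*(K:ℂ)+1) ≠ 0 := by
  intro hc
  have : (2*(K:ℝ)+1) = 0 := by exact_mod_cast hc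
  nlinarith [Nat.cast_nonneg (α := ℝ) K]

/-- 1D orthogonality over the grid. -/
lemma sum_exp_fin (t : ℤ) (ht : t.natAbs ≤ 2 * K) :
    (∑ j : Fin (2*K+1), Complex.exp ((2 * Real.pi * Complex.I) * t * ((j : ℕ) : ℂ) / (2*K+1)))
      = if t = 0 then ((2*K+1 : ℕ) : ℂ) else 0 := by
  by_cases h : t = 0
  · simp [h]
  · rw [if_neg h]
    set ζ := Complex.exp ((2 * Real.pi * Complex.I) * t / (2*K+1)) with hζdef
    have hπ : (Real.pi : ℂ) ≠ 0 := Complex.ofReal_ne_zero.mpr Real.pi_ne_zero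
    have hterm : ∀ j : Fin (2*K+1),
        Complex.exp ((2 * Real.pi * Complex.I) * t * ((j : ℕ) : ℂ) / (2*K+1)) = ζ ^ (j : ℕ) := by
      intro j
      rw [hζdef, ← Complex.exp_nat_mul]
      congr 1
      ring
    have hζN : ζ ^ (2*K+1) = 1 := by
      rw [hζdef, ← Complex.exp_nat_mul]
      have harg : ((2*K+1 : ℕ) : ℂ) * ((2 * Real.pi * Complex.I) * (t:ℂ) / (2*(K:ℂ)+1))
          = (t : ℂ) * (2 * (Real.pi:ℂ) * Complex.I) := by
        push_cast
        field_simp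
        rw [div_self NC_ne_zero]
      rw [harg]
      exact Complex.exp_int_mul_two_pi_mul_I t
    have hζ1 : ζ ≠ 1 := by
      intro heq
      rw [hζdef] at heq
      obtain ⟨n, hn⟩ := Complex.exp_eq_one_iff.mp heq
      have h5 : (2*(Real.pi:ℂ)*Complex.I) * t = (2*(Real.pi:ℂ)*Complex.I) * (n * (2*(K:ℂ)+1)) := by
        field_simp [NC_ne_zero] at hn
        linear_combination (2*(Real.pi:ℂ)*Complex.I) * hn
      have h2 : (t:ℂ) = n * (2*(K:ℂ)+1) :=
        mul_left_cancel₀ (by simp [hπ, Complex.I_ne_zero]) h5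
      have htz : t = n * (2*(K:ℤ)+1) := by exact_mod_cast h2
      have hn0 : n ≠ 0 := by
        rintro rfl
        simp at htz
        exact h htz
      have h6 : t.natAbs = n.natAbs * (2*K+1) := by
        rw [htz, Int.natAbs_mul]
        congr 1
      have h7 : 1 ≤ n.natAbs := Nat.pos_of_ne_zero (Int.natAbs_ne_zero.mpr hn0)
      nlinarith [h6, h7, ht]
    have h1 : (∑ j : Fin (2*K+1), Complex.exp ((2 * Real.pi * Complex.I) * t * ((j : ℕ) : ℂ) / (2*K+1)))
        = ∑ j ∈ Finset.range (2*K+1), ζ ^ j := by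
      rw [← Fin.sum_univ_eq_sum_range (fun j => ζ ^ j)]
      exact Finset.sum_congr rfl fun j _ => hterm j
    rw [h1, geom_sum_eq hζ1, hζN, sub_self, zero_div]



lemma sum_exp_Icc (t : ℤ) (ht : t.natAbs ≤ 2 * K) :
    (∑ r ∈ Finset.Icc (-(K:ℤ)) K,
        Complex.exp ((2 * Real.pi * Complex.I) * (r : ℂ) * (t : ℂ) / (2*K+1)))
      = if t = 0 then ((2*K+1 : ℕ) : ℂ) else 0 := by
  by_cases h : t = 0
  · subst h
    have hcard : (Finset.Icc (-(K:ℤ)) K).card = 2*K+1 := by rw [Int.card_Icc]; omega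
    simp only [Int.cast_zero, mul_zero, zero_div, Complex.exp_zero, if_true]
    rw [Finset.sum_const, hcard]
    simp
  · rw [if_neg h]
    set ζ := Complex.exp ((2 * Real.pi * Complex.I) * t / (2*K+1)) with hζdef
    have hπ : (Real.pi : ℂ) ≠ 0 := Complex.ofReal_ne_zero.mpr Real.pi_ne_zero
    have hζ0 : ζ ≠ 0 := Complex.exp_ne_zero _
    have hterm : ∀ r : ℤ,
        Complex.exp ((2 * Real.pi * Complex.I) * (r : ℂ) * (t : ℂ) / (2*K+1)) = ζ ^ r := by
      intro r
      rw [hζdef, ← Complex.exp_int_mul]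
      congr 1
      ring
    have hζN : ζ ^ (2*K+1) = 1 := by
      rw [hζdef, ← Complex.exp_nat_mul]
      have harg : ((2*K+1 : ℕ) : ℂ) * ((2 * Real.pi * Complex.I) * (t:ℂ) / (2*(K:ℂ)+1))
          = (t : ℂ) * (2 * (Real.pi:ℂ) * Complex.I) := by
        push_cast
        field_simp
        rw [div_self NC_ne_zero]
      rw [harg]
      exact Complex.exp_int_mul_two_pi_mul_I t
    have hζ1 : ζ ≠ 1 := by
      intro heq
      rw [hζdef] at heq
      obtain ⟨n, hn⟩ := Complex.exp_eq_one_iff.mp heq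
      have h5 : (2*(Real.pi:ℂ)*Complex.I) * t = (2*(Real.pi:ℂ)*Complex.I) * (n * (2*(K:ℂ)+1)) := by
        field_simp [NC_ne_zero] at hn
        linear_combination (2*(Real.pi:ℂ)*Complex.I) * hn
      have h2 : (t:ℂ) = n * (2*(K:ℂ)+1) :=
        mul_left_cancel₀ (by simp [hπ, Complex.I_ne_zero]) h5
      have htz : t = n * (2*(K:ℤ)+1) := by exact_mod_cast h2
      have hn0 : n ≠ 0 := by
        rintro rfl
        simp at htz
        exact h htz
      have h6 : t.natAbs = n.natAbs * (2*K+1) := by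
        rw [htz, Int.natAbs_mul]
        congr 1
      have h7 : 1 ≤ n.natAbs := Nat.pos_of_ne_zero (Int.natAbs_ne_zero.mpr hn0)
      nlinarith [h6, h7, ht]
    have hmap : Finset.Icc (-(K:ℤ)) K
        = Finset.map ⟨fun j : ℕ => (j:ℤ) - K, (show Function.Injective (fun j : ℕ => (j:ℤ) - K) by intro a b hab; simp only at hab; omega)⟩ (Finset.range (2*K+1)) := by
      ext x
      simp only [Finset.mem_map, Finset.mem_range, Finset.mem_Icc, Function.Embedding.coeFn_mk]
      constructor
      · intro hx; exact ⟨(x + K).toNat, by omega, by omega⟩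
      · rintro ⟨j, hj, rfl⟩; omega
    have h1 : (∑ r ∈ Finset.Icc (-(K:ℤ)) K,
        Complex.exp ((2 * Real.pi * Complex.I) * (r : ℂ) * (t : ℂ) / (2*K+1)))
        = ζ ^ (-(K:ℤ)) * ∑ j ∈ Finset.range (2*K+1), ζ ^ j := by
      rw [Finset.sum_congr rfl fun r _ => hterm r, hmap, Finset.sum_map, Finset.mul_sum]
      refine Finset.sum_congr rfl fun j _ => ?_
      simp only [Function.Embedding.coeFn_mk]
      rw [zpow_sub₀ hζ0, div_eq_mul_inv, ← zpow_neg, mul_comm, zpow_natCast]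
    rw [h1, geom_sum_eq hζ1, hζN, sub_self, zero_div, mul_zero]

/-- The frequency box. -/
abbrev box (K : ℕ) : Finset (ℤ × ℤ) := Finset.Icc (-(K:ℤ)) K ×ˢ Finset.Icc (-(K:ℤ)) K

lemma freqs_eq : freqs K = (box K).erase (0, 0) := rfl

lemma zero_mem_box : ((0,0) : ℤ × ℤ) ∈ box K := by
  simp [Finset.mem_product, Finset.mem_Icc]

/-- 2D orthogonality over the grid. -/
lemma sum_ec_grid (r : ℤ × ℤ) (h1 : r.1.natAbs ≤ 2*K) (h2 : r.2.natAbs ≤ 2*K) :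
    (∑ m : Fin (2*K+1) × Fin (2*K+1), ec K r m)
      = if r = (0,0) then (((2*K+1 : ℕ) : ℂ))^2 else 0 := by
  have hsplit : ∀ m : Fin (2*K+1) × Fin (2*K+1), ec K r m
      = Complex.exp ((2 * Real.pi * Complex.I) * (r.1 : ℂ) * ((m.1 : ℕ) : ℂ) / (2*K+1))
        * Complex.exp ((2 * Real.pi * Complex.I) * (r.2 : ℂ) * ((m.2 : ℕ) : ℂ) / (2*K+1)) := by
    intro m
    rw [ec, ← Complex.exp_add]
    congr 1
    ring
  rw [Fintype.sum_prod_type]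
  calc (∑ m1 : Fin (2*K+1), ∑ m2 : Fin (2*K+1), ec K r (m1, m2))
      = (∑ m1 : Fin (2*K+1),
          Complex.exp ((2 * Real.pi * Complex.I) * (r.1 : ℂ) * ((m1 : ℕ) : ℂ) / (2*K+1)))
        * (∑ m2 : Fin (2*K+1),
          Complex.exp ((2 * Real.pi * Complex.I) * (r.2 : ℂ) * ((m2 : ℕ) : ℂ) / (2*K+1))) := by
        rw [Finset.sum_mul_sum]
        exact Finset.sum_congr rfl fun m1 _ => Finset.sum_congr rfl fun m2 _ => hsplit (m1, m2)
    _ = (if r.1 = 0 then ((2*K+1 : ℕ) : ℂ) else 0) * (if r.2 = 0 then ((2*K+1 : ℕ) : ℂ) else 0) := by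
        rw [sum_exp_fin r.1 h1, sum_exp_fin r.2 h2]
    _ = if r = (0,0) then (((2*K+1 : ℕ) : ℂ))^2 else 0 := by
        by_cases ha : r.1 = 0 <;> by_cases hb : r.2 = 0 <;>
          simp [ha, hb, Prod.ext_iff, sq]

/-- 2D orthogonality over the frequency box. -/
lemma sum_ec_box (t1 t2 : ℤ) (h1 : t1.natAbs ≤ 2*K) (h2 : t2.natAbs ≤ 2*K) :
    (∑ r ∈ box K, Complex.exp ((2 * Real.pi * Complex.I) *
        ((r.1 : ℂ) * (t1 : ℂ) + (r.2 : ℂ) * (t2 : ℂ)) / (2*K+1)))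
      = if t1 = 0 ∧ t2 = 0 then (((2*K+1 : ℕ) : ℂ))^2 else 0 := by
  rw [Finset.sum_product]
  calc (∑ r1 ∈ Finset.Icc (-(K:ℤ)) K, ∑ r2 ∈ Finset.Icc (-(K:ℤ)) K,
        Complex.exp ((2 * Real.pi * Complex.I) *
          ((r1 : ℂ) * (t1 : ℂ) + (r2 : ℂ) * (t2 : ℂ)) / (2*K+1)))
      = (∑ r1 ∈ Finset.Icc (-(K:ℤ)) K,
          Complex.exp ((2 * Real.pi * Complex.I) * (r1 : ℂ) * (t1 : ℂ) / (2*K+1)))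
        * (∑ r2 ∈ Finset.Icc (-(K:ℤ)) K,
          Complex.exp ((2 * Real.pi * Complex.I) * (r2 : ℂ) * (t2 : ℂ) / (2*K+1))) := by
        rw [Finset.sum_mul_sum]
        refine Finset.sum_congr rfl fun r1 _ => Finset.sum_congr rfl fun r2 _ => ?_
        rw [← Complex.exp_add]
        congr 1
        ring
    _ = (if t1 = 0 then ((2*K+1 : ℕ) : ℂ) else 0) * (if t2 = 0 then ((2*K+1 : ℕ) : ℂ) else 0) := by
        rw [sum_exp_Icc t1 h1, sum_exp_Icc t2 h2]
    _ = if t1 = 0 ∧ t2 = 0 then (((2*K+1 : ℕ) : ℂ))^2 else 0 := by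
        by_cases ha : t1 = 0 <;> by_cases hb : t2 = 0 <;>
          simp [ha, hb, sq]

lemma Nc_ne_zero : ((2*K+1 : ℕ) : ℂ) ≠ 0 := Nat.cast_ne_zero.mpr (by omega)

lemma Nsq_ne_zero : (((2*K+1 : ℕ) : ℂ))^2 ≠ 0 := pow_ne_zero 2 Nc_ne_zero

lemma dft_apply (w : GridFn K) (r : ℤ × ℤ) :
    dft K w r = ((((2*K+1 : ℕ) : ℂ))^2)⁻¹ * ∑ s, w s * ec K (-r) s := by
  rw [dft]
  congr 1
  · push_cast
    ring
  · refine Finset.sum_congr rfl fun s _ => ?_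
    congr 1
    rw [ec]
    congr 1
    push_cast [Prod.fst_neg, Prod.snd_neg]
    ring

/-- Exact Fourier inversion on the grid. -/
lemma dft_inversion (w : GridFn K) (m) :
    ∑ r ∈ box K, dft K w r * ec K r m = w m := by
  have step1 : ∀ r ∈ box K, dft K w r * ec K r m
      = ∑ s, ((((2*K+1 : ℕ) : ℂ))^2)⁻¹ * w s * (ec K (-r) s * ec K r m) := by
    intro r _
    rw [dft_apply, Finset.mul_sum, Finset.sum_mul]
    exact Finset.sum_congr rfl fun s _ => by ring
  rw [Finset.sum_congr rfl step1, Finset.sum_comm]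
  have step2 : ∀ s, (∑ r ∈ box K, ((((2*K+1 : ℕ) : ℂ))^2)⁻¹ * w s * (ec K (-r) s * ec K r m))
      = ((((2*K+1 : ℕ) : ℂ))^2)⁻¹ * w s * (if s = m then (((2*K+1 : ℕ) : ℂ))^2 else 0) := by
    intro s
    rw [← Finset.mul_sum]
    congr 1
    have harg : ∀ r ∈ box K, ec K (-r) s * ec K r m
        = Complex.exp ((2 * Real.pi * Complex.I) *
            ((r.1 : ℂ) * (((((m.1 : ℕ) : ℤ) - ((s.1 : ℕ) : ℤ)) : ℤ) : ℂ)
              + (r.2 : ℂ) * (((((m.2 : ℕ) : ℤ) - ((s.2 : ℕ) : ℤ)) : ℤ) : ℂ)) / (2*K+1)) := by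
      intro r _
      rw [ec, ec, ← Complex.exp_add]
      congr 1
      push_cast [Prod.fst_neg, Prod.snd_neg]
      ring
    rw [Finset.sum_congr rfl harg,
      sum_ec_box (((m.1 : ℕ) : ℤ) - ((s.1 : ℕ) : ℤ)) (((m.2 : ℕ) : ℤ) - ((s.2 : ℕ) : ℤ))
        (by have := m.1.isLt; have := s.1.isLt; omega)
        (by have := m.2.isLt; have := s.2.isLt; omega)]
    have hiff : ((((m.1 : ℕ) : ℤ) - ((s.1 : ℕ) : ℤ) = 0) ∧ (((m.2 : ℕ) : ℤ) - ((s.2 : ℕ) : ℤ) = 0))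
        ↔ s = m := by
      rw [Prod.ext_iff, Fin.ext_iff, Fin.ext_iff]
      omega
    rw [if_congr hiff rfl rfl]
  rw [Finset.sum_congr rfl (fun s _ => step2 s)]
  rw [Finset.sum_eq_single m (fun b _ hb => by rw [if_neg hb, mul_zero])
    (fun hm => absurd (Finset.mem_univ m) hm)]
  rw [if_pos rfl]
  have h9 : (2*(K:ℂ)+1)^2 ≠ 0 := pow_ne_zero 2 NC_ne_zero
  field_simp
  exact mul_div_cancel_left₀ _ Nc_ne_zero

/-- Master pairing (Parseval) identity. -/
lemma pairing (c c' : (ℤ × ℤ) → ℂ) :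
    (∑ m : Fin (2*K+1) × Fin (2*K+1),
        (∑ r ∈ box K, c r * ec K r m) * (starRingEnd ℂ) (∑ r' ∈ box K, c' r' * ec K r' m))
      = (((2*K+1 : ℕ) : ℂ))^2 * ∑ r ∈ box K, c r * (starRingEnd ℂ) (c' r) := by
  have expand : ∀ m, (∑ r ∈ box K, c r * ec K r m)
        * (starRingEnd ℂ) (∑ r' ∈ box K, c' r' * ec K r' m)
      = ∑ r ∈ box K, ∑ r' ∈ box K, (c r * (starRingEnd ℂ) (c' r')) * ec K (r + -r') m := by
    intro m
    rw [map_sum, Finset.sum_mul_sum]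
    refine Finset.sum_congr rfl fun r _ => Finset.sum_congr rfl fun r' _ => ?_
    rw [map_mul, ec_conj, ← ec_mul]
    ring
  calc (∑ m : Fin (2*K+1) × Fin (2*K+1),
        (∑ r ∈ box K, c r * ec K r m) * (starRingEnd ℂ) (∑ r' ∈ box K, c' r' * ec K r' m))
      = ∑ r ∈ box K, ∑ r' ∈ box K, (c r * (starRingEnd ℂ) (c' r')) * ∑ m, ec K (r + -r') m := by
        rw [Finset.sum_congr rfl (fun m _ => expand m), Finset.sum_comm]
        refine Finset.sum_congr rfl fun r _ => ?_
        rw [Finset.sum_comm]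
        refine Finset.sum_congr rfl fun r' _ => ?_
        rw [Finset.mul_sum]
    _ = ∑ r ∈ box K, (c r * (starRingEnd ℂ) (c' r)) * (((2*K+1 : ℕ) : ℂ))^2 := by
        refine Finset.sum_congr rfl fun r hr => ?_
        have hS : ∀ r' ∈ box K, (∑ m, ec K (r + -r') m)
            = if r + -r' = (0,0) then (((2*K+1 : ℕ) : ℂ))^2 else 0 := by
          intro r' hr'
          refine sum_ec_grid _ ?_ ?_
          · have h1 := (Finset.mem_product.mp hr).1
            have h2 := (Finset.mem_product.mp hr').1
            rw [Finset.mem_Icc] at h1 h2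
            simp only [Prod.fst_add, Prod.fst_neg]
            omega
          · have h1 := (Finset.mem_product.mp hr).2
            have h2 := (Finset.mem_product.mp hr').2
            rw [Finset.mem_Icc] at h1 h2
            simp only [Prod.snd_add, Prod.snd_neg]
            omega
        rw [Finset.sum_congr rfl (fun r' hr' => by rw [hS r' hr'])]
        rw [Finset.sum_eq_single r]
        · rw [if_pos (by simp [Prod.ext_iff])]
        · intro b _ hb
          rw [if_neg, mul_zero]
          intro hc
          apply hb
          rw [Prod.ext_iff] at hc ⊢
          simp only [Prod.fst_add, Prod.fst_neg, Prod.snd_add, Prod.snd_neg] at hc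
          omega
        · intro hrn
          exact absurd hr hrn
    _ = (((2*K+1 : ℕ) : ℂ))^2 * ∑ r ∈ box K, c r * (starRingEnd ℂ) (c' r) := by
        rw [Finset.mul_sum]
        exact Finset.sum_congr rfl fun r _ => by ring

def multC (L : ℝ) (r : ℤ × ℤ) : ℂ :=
  ((4 * Real.pi ^ 2 * ((r.1 : ℝ) ^ 2 + (r.2 : ℝ) ^ 2) / L ^ 2 : ℝ) : ℂ)

lemma specOp_apply (L : ℝ) (α : ℤ) (w : GridFn K) (m) :
    specOp K L α w m = ∑ r ∈ freqs K, (multC L r) ^ α * dft K w r * ec K r m := rfl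

lemma D1_apply (L : ℝ) (w : GridFn K) (m) :
    D1 K L w m = ∑ r ∈ box K, (2 * Real.pi * Complex.I * (r.1 : ℂ) / (L : ℂ)) * dft K w r
      * ec K r m := rfl

lemma D2_apply (L : ℝ) (w : GridFn K) (m) :
    D2 K L w m = ∑ r ∈ box K, (2 * Real.pi * Complex.I * (r.2 : ℂ) / (L : ℂ)) * dft K w r
      * ec K r m := rfl

lemma multC_zero (L : ℝ) : multC L (0, 0) = 0 := by simp [multC]

lemma multC_neg (L : ℝ) (r : ℤ × ℤ) : multC L (-r) = multC L r := by
  unfold multC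
  congr 1
  push_cast [Prod.fst_neg, Prod.snd_neg]
  ring

lemma mem_freqs_ne {r : ℤ × ℤ} (hr : r ∈ freqs K) : r ≠ (0, 0) :=
  (Finset.mem_erase.mp hr).1

lemma mem_freqs_box {r : ℤ × ℤ} (hr : r ∈ freqs K) : r ∈ box K :=
  (Finset.mem_erase.mp hr).2

lemma multC_ne_zero {L : ℝ} (hL : 0 < L) {r : ℤ × ℤ} (hr : r ≠ (0, 0)) : multC L r ≠ 0 := by
  unfold multC
  rw [Complex.ofReal_ne_zero]
  have h1 : (r.1 : ℝ) ≠ 0 ∨ (r.2 : ℝ) ≠ 0 := by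
    by_contra hc
    push_neg at hc
    exact hr (Prod.ext_iff.mpr ⟨by exact_mod_cast hc.1, by exact_mod_cast hc.2⟩)
  have h2 : 0 < (r.1 : ℝ) ^ 2 + (r.2 : ℝ) ^ 2 := by
    rcases h1 with h | h
    · have := pow_pos (abs_pos.mpr h) 2
      nlinarith [sq_nonneg (r.2 : ℝ), _root_.sq_abs (r.1 : ℝ)]
    · have := pow_pos (abs_pos.mpr h) 2
      nlinarith [sq_nonneg (r.1 : ℝ), _root_.sq_abs (r.2 : ℝ)]
  positivity

lemma specOp_box_apply (L : ℝ) {α : ℤ} (hα : α ≠ 0) (w : GridFn K) (m) :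
    specOp K L α w m = ∑ r ∈ box K, (multC L r) ^ α * dft K w r * ec K r m := by
  rw [specOp_apply, freqs_eq]
  exact Finset.sum_erase _ (by rw [multC_zero, zero_zpow α hα, zero_mul, zero_mul])

lemma dft_add_mul (f g : GridFn K) (c : ℂ) (r : ℤ × ℤ) :
    dft K (fun m => f m + c * g m) r = dft K f r + c * dft K g r := by
  rw [dft_apply, dft_apply, dft_apply]
  have h : (∑ s, (f s + c * g s) * ec K (-r) s)
      = (∑ s, f s * ec K (-r) s) + c * ∑ s, g s * ec K (-r) s := by
    rw [Finset.mul_sum, ← Finset.sum_add_distrib]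
    exact Finset.sum_congr rfl fun s _ => by ring
  rw [h]
  ring

lemma specOp_add_mul (L : ℝ) (α : ℤ) (f g : GridFn K) (c : ℂ) (m) :
    specOp K L α (fun m' => f m' + c * g m') m = specOp K L α f m + c * specOp K L α g m := by
  rw [specOp_apply, specOp_apply, specOp_apply, Finset.mul_sum, ← Finset.sum_add_distrib]
  refine Finset.sum_congr rfl fun r _ => ?_
  rw [dft_add_mul]
  ring

lemma D1_add_mul (L : ℝ) (f g : GridFn K) (c : ℂ) (m) :
    D1 K L (fun m' => f m' + c * g m') m = D1 K L f m + c * D1 K L g m := by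
  rw [D1_apply, D1_apply, D1_apply, Finset.mul_sum, ← Finset.sum_add_distrib]
  refine Finset.sum_congr rfl fun r _ => ?_
  rw [dft_add_mul]
  ring

lemma D2_add_mul (L : ℝ) (f g : GridFn K) (c : ℂ) (m) :
    D2 K L (fun m' => f m' + c * g m') m = D2 K L f m + c * D2 K L g m := by
  rw [D2_apply, D2_apply, D2_apply, Finset.mul_sum, ← Finset.sum_add_distrib]
  refine Finset.sum_congr rfl fun r _ => ?_
  rw [dft_add_mul]
  ring

lemma dft_conj (w : GridFn K) (hw : RealValued w) (r : ℤ × ℤ) :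
    (starRingEnd ℂ) (dft K w r) = dft K w (-r) := by
  rw [dft_apply, dft_apply, map_mul, map_sum, map_inv₀, map_pow, map_natCast, neg_neg]
  congr 1
  refine Finset.sum_congr rfl fun s _ => ?_
  rw [map_mul, ec_conj, neg_neg, Complex.conj_eq_iff_im.mpr (hw s)]

lemma neg_mem_freqs {r : ℤ × ℤ} (hr : r ∈ freqs K) : -r ∈ freqs K := by
  rw [freqs_eq, Finset.mem_erase, Finset.mem_product, Finset.mem_Icc, Finset.mem_Icc] at hr ⊢
  obtain ⟨h0, ⟨ha, hb⟩⟩ := hr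
  refine ⟨?_, ⟨?_, ?_⟩⟩
  · intro hc
    apply h0
    rw [Prod.ext_iff] at hc ⊢
    simp only [Prod.fst_neg, Prod.snd_neg] at hc
    omega
  · simp only [Prod.fst_neg]
    omega
  · simp only [Prod.snd_neg]
    omega

lemma specOp_real (L : ℝ) (α : ℤ) (w : GridFn K) (hw : RealValued w) :
    RealValued (specOp K L α w) := by
  intro m
  rw [← Complex.conj_eq_iff_im, specOp_apply, map_sum]
  have hterm : ∀ r ∈ freqs K,
      (starRingEnd ℂ) ((multC L r) ^ α * dft K w r * ec K r m)
        = (multC L (-r)) ^ α * dft K w (-r) * ec K (-r) m := by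
    intro r _
    rw [map_mul, map_mul, map_zpow₀, ec_conj, dft_conj w hw, multC_neg,
      show (starRingEnd ℂ) (multC L r) = multC L r from by unfold multC; rw [Complex.conj_ofReal]]
  rw [Finset.sum_congr rfl hterm]
  refine Finset.sum_nbij' (fun r => -r) (fun r => -r) ?_ ?_ ?_ ?_ ?_
  · intro r hr; exact neg_mem_freqs hr
  · intro r hr; exact neg_mem_freqs hr
  · intro r _; exact neg_neg r
  · intro r _; exact neg_neg r
  · intro r _; rfl

lemma dft_specOp {L : ℝ} (α : ℤ) (w : GridFn K) {r : ℤ × ℤ} (hr : r ∈ freqs K) :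
    dft K (specOp K L α w) r = (multC L r) ^ α * dft K w r := by
  rw [dft_apply]
  have h1 : ∀ s, specOp K L α w s * ec K (-r) s
      = ∑ r' ∈ freqs K, ((multC L r') ^ α * dft K w r') * (ec K r' s * ec K (-r) s) := by
    intro s
    rw [specOp_apply, Finset.sum_mul]
    exact Finset.sum_congr rfl fun r' _ => by ring
  rw [Finset.sum_congr rfl (fun s _ => h1 s), Finset.sum_comm]
  have h2 : ∀ r' ∈ freqs K,
      (∑ s, ((multC L r') ^ α * dft K w r') * (ec K r' s * ec K (-r) s))
        = ((multC L r') ^ α * dft K w r') * (if r' + -r = (0,0) then (((2*K+1:ℕ):ℂ))^2 else 0) := by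
    intro r' hr'
    rw [← Finset.mul_sum]
    congr 1
    rw [Finset.sum_congr rfl (fun s _ => ec_mul r' (-r) s)]
    refine sum_ec_grid _ ?_ ?_
    · have ha := (Finset.mem_product.mp (mem_freqs_box hr)).1
      have hb := (Finset.mem_product.mp (mem_freqs_box hr')).1
      rw [Finset.mem_Icc] at ha hb
      simp only [Prod.fst_add, Prod.fst_neg]
      omega
    · have ha := (Finset.mem_product.mp (mem_freqs_box hr)).2
      have hb := (Finset.mem_product.mp (mem_freqs_box hr')).2
      rw [Finset.mem_Icc] at ha hb
      simp only [Prod.snd_add, Prod.snd_neg]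
      omega
  rw [Finset.sum_congr rfl h2]
  rw [Finset.sum_eq_single r]
  · rw [if_pos (by simp [Prod.ext_iff])]
    field_simp
    rw [mul_comm (((2*K+1:ℕ):ℂ)), mul_assoc, mul_div_assoc, mul_div_cancel_left₀ _ Nc_ne_zero]
  · intro b _ hb
    rw [if_neg, mul_zero]
    intro hc
    apply hb
    rw [Prod.ext_iff] at hc ⊢
    simp only [Prod.fst_add, Prod.fst_neg, Prod.snd_add, Prod.snd_neg] at hc
    omega
  · intro hrn
    exact absurd hr hrn

lemma dft_zero_freq (w : GridFn K) :
    dft K w (0, 0) = ((((2*K+1:ℕ):ℂ))^2)⁻¹ * ∑ s, w s := by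
  rw [dft_apply]
  congr 1
  refine Finset.sum_congr rfl fun s _ => ?_
  have : ec K (-((0:ℤ),(0:ℤ))) s = 1 := by
    simp [ec, Prod.fst_neg, Prod.snd_neg]
  rw [this, mul_one]

/-- Composition `specOp α ∘ specOp (−α) = id − mean`. -/
lemma specOp_cancel {L : ℝ} (hL : 0 < L) {α : ℤ} (hα : α ≠ 0) (w : GridFn K) (m) :
    specOp K L α (specOp K L (-α) w) m = w m - dft K w (0, 0) := by
  rw [specOp_apply]
  have h1 : ∀ r ∈ freqs K,
      (multC L r) ^ α * dft K (specOp K L (-α) w) r * ec K r m = dft K w r * ec K r m := by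
    intro r hr
    have hz : multC L r ^ α * multC L r ^ (-α) = 1 := by
      rw [← zpow_add₀ (multC_ne_zero hL (mem_freqs_ne hr)), add_neg_cancel, zpow_zero]
    rw [dft_specOp (-α) w hr]
    linear_combination (dft K w r * ec K r m) * hz
  rw [Finset.sum_congr rfl h1, freqs_eq, Finset.sum_erase_eq_sub zero_mem_box,
    dft_inversion, ec_zero, mul_one]

lemma specOp_const (L : ℝ) (α : ℤ) (c : ℂ) (m) :
    specOp K (L : ℝ) α (fun _ => c) m = 0 := by
  rw [specOp_apply]
  refine Finset.sum_eq_zero fun r hr => ?_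
  have hd : dft K (fun _ => c) r = 0 := by
    rw [dft_apply]
    have h1 : (∑ s, (fun _ : Fin (2*K+1) × Fin (2*K+1) => c) s * ec K (-r) s)
        = c * ∑ s, ec K (-r) s := by
      rw [Finset.mul_sum]
    rw [h1]
    have hbox := mem_freqs_box hr
    have ha := (Finset.mem_product.mp hbox).1
    have hb := (Finset.mem_product.mp hbox).2
    rw [Finset.mem_Icc] at ha hb
    rw [sum_ec_grid (-r) (by simp only [Prod.fst_neg]; omega) (by simp only [Prod.snd_neg]; omega)]
    rw [if_neg, mul_zero, mul_zero]
    intro hc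
    apply mem_freqs_ne hr
    rw [Prod.ext_iff] at hc ⊢
    simp only [Prod.fst_neg, Prod.snd_neg] at hc
    omega
  rw [hd, mul_zero, zero_mul]

lemma mul_conj_re (a b : ℂ) : (a * (starRingEnd ℂ) b).re = a.re * b.re + a.im * b.im := by
  rw [Complex.mul_re, Complex.conj_re, Complex.conj_im]
  ring

lemma dft_smul (c : ℂ) (f : GridFn K) (r : ℤ × ℤ) :
    dft K (fun m => c * f m) r = c * dft K f r := by
  have h : (∑ s, (c * f s) * ec K (-r) s) = c * ∑ s, f s * ec K (-r) s := by
    rw [Finset.mul_sum]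
    exact Finset.sum_congr rfl fun s _ => by ring
  rw [dft_apply, dft_apply, h]
  ring

lemma specOp_smul (L : ℝ) (α : ℤ) (c : ℂ) (f : GridFn K) (m) :
    specOp K L α (fun m' => c * f m') m = c * specOp K L α f m := by
  rw [specOp_apply, specOp_apply, Finset.mul_sum]
  refine Finset.sum_congr rfl fun r _ => ?_
  rw [dft_smul]
  ring

/-- Parseval for `specOp` against an arbitrary function. -/
lemma sum_specOp_conj (L : ℝ) {α : ℤ} (hα : α ≠ 0) (u w : GridFn K) :
    (∑ m, specOp K L α u m * (starRingEnd ℂ) (w m))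
      = (((2*K+1:ℕ):ℂ))^2 * ∑ r ∈ box K,
          ((multC L r) ^ α * dft K u r) * (starRingEnd ℂ) (dft K w r) := by
  have h := pairing (K := K) (fun r => (multC L r) ^ α * dft K u r) (fun r => dft K w r)
  rw [← h]
  refine Finset.sum_congr rfl fun m _ => ?_
  rw [specOp_box_apply L hα, dft_inversion]

/-- Summation by parts for the gradient. -/
lemma SBP1 (L : ℝ) (u w : GridFn K) :
    (∑ m, (D1 K L u m * (starRingEnd ℂ) (D1 K L w m)
        + D2 K L u m * (starRingEnd ℂ) (D2 K L w m)))
      = ∑ m, specOp K L 1 u m * (starRingEnd ℂ) (w m) := by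
  rw [Finset.sum_add_distrib]
  have h1 := pairing (K := K) (fun r => (2 * Real.pi * Complex.I * (r.1 : ℂ) / (L : ℂ)) * dft K u r)
    (fun r => (2 * Real.pi * Complex.I * (r.1 : ℂ) / (L : ℂ)) * dft K w r)
  have h2 := pairing (K := K) (fun r => (2 * Real.pi * Complex.I * (r.2 : ℂ) / (L : ℂ)) * dft K u r)
    (fun r => (2 * Real.pi * Complex.I * (r.2 : ℂ) / (L : ℂ)) * dft K w r)
  have e1 : (∑ m, D1 K L u m * (starRingEnd ℂ) (D1 K L w m))
      = (((2*K+1:ℕ):ℂ))^2 * ∑ r ∈ box K,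
          ((2 * Real.pi * Complex.I * (r.1 : ℂ) / (L : ℂ)) * dft K u r)
            * (starRingEnd ℂ) ((2 * Real.pi * Complex.I * (r.1 : ℂ) / (L : ℂ)) * dft K w r) := by
    rw [← h1]
    exact Finset.sum_congr rfl fun m _ => by rw [D1_apply, D1_apply]
  have e2 : (∑ m, D2 K L u m * (starRingEnd ℂ) (D2 K L w m))
      = (((2*K+1:ℕ):ℂ))^2 * ∑ r ∈ box K,
          ((2 * Real.pi * Complex.I * (r.2 : ℂ) / (L : ℂ)) * dft K u r)
            * (starRingEnd ℂ) ((2 * Real.pi * Complex.I * (r.2 : ℂ) / (L : ℂ)) * dft K w r) := by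
    rw [← h2]
    exact Finset.sum_congr rfl fun m _ => by rw [D2_apply, D2_apply]
  rw [e1, e2, sum_specOp_conj L (by norm_num : (1:ℤ) ≠ 0) u w, ← mul_add, ← Finset.sum_add_distrib]
  congr 1
  refine Finset.sum_congr rfl fun r _ => ?_
  have hkey : (2 * (Real.pi:ℂ) * Complex.I * (r.1 : ℂ) / (L : ℂ))
        * (starRingEnd ℂ) (2 * (Real.pi:ℂ) * Complex.I * (r.1 : ℂ) / (L : ℂ))
      + (2 * (Real.pi:ℂ) * Complex.I * (r.2 : ℂ) / (L : ℂ))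
        * (starRingEnd ℂ) (2 * (Real.pi:ℂ) * Complex.I * (r.2 : ℂ) / (L : ℂ))
      = multC L r := by
    simp only [map_div₀, map_mul, Complex.conj_I, Complex.conj_ofReal, map_ofNat, map_intCast]
    unfold multC
    push_cast
    linear_combination (-(4 * (Real.pi:ℂ)^2 * ((r.1:ℂ)^2 + (r.2:ℂ)^2) / (L:ℂ)^2)) * Complex.I_sq
  rw [map_mul, map_mul, zpow_one]
  linear_combination (dft K u r * (starRingEnd ℂ) (dft K w r)) * hkey

/-- Summation by parts for the Laplacian pair. -/
lemma SBP2 (L : ℝ) (u w : GridFn K) :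
    (∑ m, specOp K L 1 u m * (starRingEnd ℂ) (specOp K L 1 w m))
      = ∑ m, specOp K L 2 u m * (starRingEnd ℂ) (w m) := by
  have h1 := pairing (K := K) (fun r => (multC L r) ^ (1:ℤ) * dft K u r)
    (fun r => (multC L r) ^ (1:ℤ) * dft K w r)
  have e1 : (∑ m, specOp K L 1 u m * (starRingEnd ℂ) (specOp K L 1 w m))
      = (((2*K+1:ℕ):ℂ))^2 * ∑ r ∈ box K,
          ((multC L r) ^ (1:ℤ) * dft K u r) * (starRingEnd ℂ) ((multC L r) ^ (1:ℤ) * dft K w r) := by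
    rw [← h1]
    exact Finset.sum_congr rfl fun m _ => by
      rw [specOp_box_apply L (by norm_num : (1:ℤ) ≠ 0), specOp_box_apply L (by norm_num : (1:ℤ) ≠ 0)]
  rw [e1, sum_specOp_conj L (by norm_num : (2:ℤ) ≠ 0) u w]
  congr 1
  refine Finset.sum_congr rfl fun r _ => ?_
  have hc : (starRingEnd ℂ) (multC L r) = multC L r := by
    unfold multC
    rw [Complex.conj_ofReal]
  have h2 : (multC L r) ^ (2:ℤ) = multC L r * multC L r := by
    rw [show (2:ℤ) = ((2:ℕ):ℤ) from rfl, zpow_natCast, pow_two]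
  rw [zpow_one, map_mul, hc, h2]
  ring

/-- Symmetry of the inverse-Laplacian pairing in real part. -/
lemma invlap_symm_re (L : ℝ) (u w : GridFn K) :
    (∑ m, specOp K L (-1) u m * (starRingEnd ℂ) (w m)).re
      = (∑ m, specOp K L (-1) w m * (starRingEnd ℂ) (u m)).re := by
  rw [sum_specOp_conj L (by norm_num : (-1:ℤ) ≠ 0) u w,
    sum_specOp_conj L (by norm_num : (-1:ℤ) ≠ 0) w u]
  have hN : ((((2*K+1:ℕ):ℂ))^2) = (((((2*K+1:ℕ)):ℝ)^2 : ℝ) : ℂ) := by push_cast; ring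
  rw [hN, Complex.re_ofReal_mul, Complex.re_ofReal_mul, Complex.re_sum, Complex.re_sum]
  congr 1
  refine Finset.sum_congr rfl fun r _ => ?_
  have hmr : ∃ x : ℝ, (multC L r) ^ (-1:ℤ) = (x : ℂ) := by
    refine ⟨(4 * Real.pi ^ 2 * ((r.1 : ℝ) ^ 2 + (r.2 : ℝ) ^ 2) / L ^ 2)⁻¹, ?_⟩
    unfold multC
    rw [zpow_neg, zpow_one, Complex.ofReal_inv]
  obtain ⟨x, hx⟩ := hmr
  rw [hx, mul_assoc, mul_assoc, Complex.re_ofReal_mul, Complex.re_ofReal_mul, mul_conj_re,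
    mul_conj_re]
  ring

lemma lap_add_mul (L : ℝ) (f g : GridFn K) (c : ℂ) (m) :
    lapN K L (fun m' => f m' + c * g m') m = lapN K L f m + c * lapN K L g m := by
  unfold lapN
  rw [specOp_add_mul]
  ring

lemma ipN_re_poly (L : ℝ) (P Q R S : GridFn K) (s : ℝ) :
    (ipN K L (fun m => P m + (s:ℂ) * Q m) (fun m => R m + (s:ℂ) * S m)).re
      = (ipN K L P R).re + s * ((ipN K L Q R).re + (ipN K L P S).re)
        + s^2 * (ipN K L Q S).re := by
  unfold ipN
  have hpt : ∀ m, (P m + (s:ℂ) * Q m) * (starRingEnd ℂ) (R m + (s:ℂ) * S m)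
      = P m * (starRingEnd ℂ) (R m) + (s:ℂ) * (Q m * (starRingEnd ℂ) (R m))
        + ((s:ℂ) * (P m * (starRingEnd ℂ) (S m))
            + (s:ℂ)^2 * (Q m * (starRingEnd ℂ) (S m))) := by
    intro m
    rw [map_add, map_mul, Complex.conj_ofReal]
    ring
  rw [Finset.sum_congr rfl (fun m _ => hpt m), Finset.sum_add_distrib, Finset.sum_add_distrib,
    Finset.sum_add_distrib, ← Finset.mul_sum, ← Finset.mul_sum, ← Finset.mul_sum]
  simp only [mul_add, ← Complex.ofReal_pow, Complex.add_re, Complex.re_ofReal_mul]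
  ring

lemma ipN_add_mul_left (L : ℝ) (f g v : GridFn K) (c : ℂ) :
    ipN K L (fun m => f m + c * g m) v = ipN K L f v + c * ipN K L g v := by
  have h : (∑ s, (f s + c * g s) * (starRingEnd ℂ) (v s))
      = (∑ s, f s * (starRingEnd ℂ) (v s)) + c * ∑ s, g s * (starRingEnd ℂ) (v s) := by
    rw [Finset.mul_sum, ← Finset.sum_add_distrib]
    exact Finset.sum_congr rfl fun s _ => by ring
  simp only [ipN]
  rw [h]
  ring

lemma ipN_smul_left (L : ℝ) (u v : GridFn K) (c : ℂ) :
    ipN K L (fun m => c * u m) v = c * ipN K L u v := by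
  unfold ipN
  have h : (∑ s, (c * u s) * (starRingEnd ℂ) (v s)) = c * ∑ s, u s * (starRingEnd ℂ) (v s) := by
    rw [Finset.mul_sum]
    exact Finset.sum_congr rfl fun s _ => by ring
  rw [h]
  ring

lemma ipN_const_left_zero (L : ℝ) (c : ℂ) (w : GridFn K) (hw : ZeroMean w) :
    ipN K L (fun _ => c) w = 0 := by
  unfold ipN
  have h : (∑ s, c * (starRingEnd ℂ) (w s)) = c * (starRingEnd ℂ) (∑ s, w s) := by
    rw [map_sum, Finset.mul_sum]
  rw [h, hw, map_zero, mul_zero, mul_zero]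

lemma hasDerivAt_poly4 (c0 B C2 C3 C4 : ℝ) :
    HasDerivAt (fun s : ℝ => c0 + s * B + s^2 * C2 + s^3 * C3 + s^4 * C4) B 0 := by
  have h : HasDerivAt (fun s : ℝ => c0 + s * B + s^2 * C2 + s^3 * C3 + s^4 * C4)
      (0 + 1 * B + ((2:ℕ) * (0:ℝ)^(2-1)) * C2 + ((3:ℕ) * (0:ℝ)^(3-1)) * C3
        + ((4:ℕ) * (0:ℝ)^(4-1)) * C4) 0 := by
    exact ((((hasDerivAt_const (0:ℝ) c0).add ((hasDerivAt_id (0:ℝ)).mul_const B)).add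
      ((hasDerivAt_pow 2 (0:ℝ)).mul_const C2)).add
      ((hasDerivAt_pow 3 (0:ℝ)).mul_const C3)).add
      ((hasDerivAt_pow 4 (0:ℝ)).mul_const C4)
  convert h using 1
  norm_num

/-- Expansion of `EN` along a line. -/
lemma EN_expand (L ε : ℝ) (φ wh : GridFn K) :
    ∃ C2 C3 C4 : ℝ, ∀ s : ℝ,
      EN K L ε (fun m => φ m + (s:ℂ) * wh m)
        = EN K L ε φ
          + s * ((L/(2*(K:ℝ)+1))^2 * ∑ m, ((φ m).re^3 * (wh m).re
              + (1-ε) * ((φ m).re * (wh m).re)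
              - 2*((D1 K L φ m).re*(D1 K L wh m).re + (D1 K L φ m).im*(D1 K L wh m).im
                   + (D2 K L φ m).re*(D2 K L wh m).re + (D2 K L φ m).im*(D2 K L wh m).im)
              + ((specOp K L 1 φ m).re*(specOp K L 1 wh m).re
                 + (specOp K L 1 φ m).im*(specOp K L 1 wh m).im)))
          + s^2 * ((L/(2*(K:ℝ)+1))^2 * ∑ m, ((3/2)*(φ m).re^2*(wh m).re^2
              + ((1-ε)/2)*(wh m).re^2
              - ((D1 K L wh m).re^2 + (D1 K L wh m).im^2
                 + (D2 K L wh m).re^2 + (D2 K L wh m).im^2)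
              + (1/2)*((specOp K L 1 wh m).re^2 + (specOp K L 1 wh m).im^2)))
          + s^3 * ((L/(2*(K:ℝ)+1))^2 * ∑ m, (φ m).re * (wh m).re^3)
          + s^4 * ((L/(2*(K:ℝ)+1))^2 * ∑ m, (1/4) * (wh m).re^4) := by
  refine ⟨((L/(2*(K:ℝ)+1))^2 * ∑ m, ((3/2)*(φ m).re^2*(wh m).re^2
              + ((1-ε)/2)*(wh m).re^2
              - ((D1 K L wh m).re^2 + (D1 K L wh m).im^2
                 + (D2 K L wh m).re^2 + (D2 K L wh m).im^2)
              + (1/2)*((specOp K L 1 wh m).re^2 + (specOp K L 1 wh m).im^2))),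
    ((L/(2*(K:ℝ)+1))^2 * ∑ m, (φ m).re * (wh m).re^3),
    ((L/(2*(K:ℝ)+1))^2 * ∑ m, (1/4) * (wh m).re^4), fun s => ?_⟩
  have key : ∀ m : Fin (2*K+1) × Fin (2*K+1),
      (1/4) * ((fun m' => φ m' + (s:ℂ) * wh m') m).re ^ 4
        + ((1 - ε)/2) * ((fun m' => φ m' + (s:ℂ) * wh m') m).re ^ 2
        - gradSqN K L (fun m' => φ m' + (s:ℂ) * wh m') m
        + (1/2) * ‖lapN K L (fun m' => φ m' + (s:ℂ) * wh m') m‖ ^ 2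
      = ((1/4) * (φ m).re ^ 4 + ((1 - ε)/2) * (φ m).re ^ 2 - gradSqN K L φ m
          + (1/2) * ‖lapN K L φ m‖ ^ 2)
        + s * ((φ m).re^3 * (wh m).re + (1-ε) * ((φ m).re * (wh m).re)
              - 2*((D1 K L φ m).re*(D1 K L wh m).re + (D1 K L φ m).im*(D1 K L wh m).im
                   + (D2 K L φ m).re*(D2 K L wh m).re + (D2 K L φ m).im*(D2 K L wh m).im)
              + ((specOp K L 1 φ m).re*(specOp K L 1 wh m).re
                 + (specOp K L 1 φ m).im*(specOp K L 1 wh m).im))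
        + s^2 * ((3/2)*(φ m).re^2*(wh m).re^2 + ((1-ε)/2)*(wh m).re^2
              - ((D1 K L wh m).re^2 + (D1 K L wh m).im^2
                 + (D2 K L wh m).re^2 + (D2 K L wh m).im^2)
              + (1/2)*((specOp K L 1 wh m).re^2 + (specOp K L 1 wh m).im^2))
        + s^3 * ((φ m).re * (wh m).re^3)
        + s^4 * ((1/4) * (wh m).re^4) := by
    intro m
    unfold gradSqN lapN
    rw [D1_add_mul, D2_add_mul, specOp_add_mul]
    simp only [Complex.sq_norm, Complex.normSq_apply, Complex.add_re, Complex.add_im,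
      Complex.re_ofReal_mul, Complex.im_ofReal_mul, Complex.neg_re, Complex.neg_im]
    ring
  simp only [EN]
  rw [Finset.sum_congr rfl (fun m _ => key m), Finset.sum_add_distrib, Finset.sum_add_distrib,
    Finset.sum_add_distrib, Finset.sum_add_distrib, ← Finset.mul_sum, ← Finset.mul_sum,
    ← Finset.mul_sum, ← Finset.mul_sum]
  push_cast
  ring

/-- First variation of the energy equals the chemical-potential pairing. -/
lemma first_variation_EN (L ε : ℝ) (φ u : GridFn K) (hφ : RealValued φ) (hu : RealValued u) :
    (∑ m, ((φ m).re^3 * (u m).re + (1-ε) * ((φ m).re * (u m).re)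
      - 2*((D1 K L φ m).re*(D1 K L u m).re + (D1 K L φ m).im*(D1 K L u m).im
           + (D2 K L φ m).re*(D2 K L u m).re + (D2 K L φ m).im*(D2 K L u m).im)
      + ((specOp K L 1 φ m).re*(specOp K L 1 u m).re
         + (specOp K L 1 φ m).im*(specOp K L 1 u m).im)))
      = (∑ m, muN K L ε φ m * (starRingEnd ℂ) (u m)).re := by
  have hmu : ∀ m : Fin (2*K+1) × Fin (2*K+1), (muN K L ε φ m * (starRingEnd ℂ) (u m)).re
      = ((φ m ^ 3 + ((1-ε:ℝ):ℂ) * φ m) * (starRingEnd ℂ) (u m)).re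
        - 2 * (specOp K L 1 φ m * (starRingEnd ℂ) (u m)).re
        + (specOp K L 2 φ m * (starRingEnd ℂ) (u m)).re := by
    intro m
    have hsplit : muN K L ε φ m * (starRingEnd ℂ) (u m)
        = (φ m ^ 3 + ((1-ε:ℝ):ℂ) * φ m) * (starRingEnd ℂ) (u m)
          + (((-2:ℝ):ℂ) * (specOp K L 1 φ m * (starRingEnd ℂ) (u m))
            + specOp K L 2 φ m * (starRingEnd ℂ) (u m)) := by
      unfold muN lapN bilapN
      push_cast
      ring
    rw [hsplit, Complex.add_re, Complex.add_re, Complex.re_ofReal_mul]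
    ring
  have e0 : ∀ m : Fin (2*K+1) × Fin (2*K+1),
      ((φ m ^ 3 + ((1-ε:ℝ):ℂ) * φ m) * (starRingEnd ℂ) (u m)).re
        = (φ m).re^3 * (u m).re + (1-ε) * ((φ m).re * (u m).re) := by
    intro m
    have h1 : φ m = (((φ m).re : ℝ) : ℂ) := Complex.ext rfl (by rw [hφ m]; simp)
    have h2 : u m = (((u m).re : ℝ) : ℂ) := Complex.ext rfl (by rw [hu m]; simp)
    rw [h1, h2, Complex.conj_ofReal]
    have h3 : ((((φ m).re : ℝ) : ℂ) ^ 3 + ((1-ε:ℝ):ℂ) * (((φ m).re : ℝ) : ℂ))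
          * (((u m).re : ℝ) : ℂ)
        = ((((φ m).re^3 + (1-ε) * (φ m).re) * (u m).re : ℝ) : ℂ) := by
      push_cast
      ring
    rw [h3]
    simp only [Complex.ofReal_re]
    ring
  have e1 : (∑ m, (specOp K L 1 φ m * (starRingEnd ℂ) (u m)).re)
      = ∑ m, ((D1 K L φ m).re*(D1 K L u m).re + (D1 K L φ m).im*(D1 K L u m).im
            + (D2 K L φ m).re*(D2 K L u m).re + (D2 K L φ m).im*(D2 K L u m).im) := by
    rw [← Complex.re_sum, ← SBP1 L φ u, Complex.re_sum]
    exact Finset.sum_congr rfl fun m _ => by rw [Complex.add_re, mul_conj_re, mul_conj_re]; ring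
  have e2 : (∑ m, (specOp K L 2 φ m * (starRingEnd ℂ) (u m)).re)
      = ∑ m, ((specOp K L 1 φ m).re*(specOp K L 1 u m).re
            + (specOp K L 1 φ m).im*(specOp K L 1 u m).im) := by
    rw [← Complex.re_sum, ← SBP2 L φ u, Complex.re_sum]
    exact Finset.sum_congr rfl fun m _ => mul_conj_re _ _
  rw [Complex.re_sum, Finset.sum_congr rfl (fun m _ => hmu m)]
  have split : (∑ m, (((φ m ^ 3 + ((1-ε:ℝ):ℂ) * φ m) * (starRingEnd ℂ) (u m)).re
      - 2 * (specOp K L 1 φ m * (starRingEnd ℂ) (u m)).re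
      + (specOp K L 2 φ m * (starRingEnd ℂ) (u m)).re))
      = (∑ m, ((φ m ^ 3 + ((1-ε:ℝ):ℂ) * φ m) * (starRingEnd ℂ) (u m)).re)
        - 2 * (∑ m, (specOp K L 1 φ m * (starRingEnd ℂ) (u m)).re)
        + ∑ m, (specOp K L 2 φ m * (starRingEnd ℂ) (u m)).re := by
    rw [Finset.mul_sum, ← Finset.sum_sub_distrib, ← Finset.sum_add_distrib]
  rw [split, Finset.sum_congr rfl (fun m _ => e0 m), e1, e2]
  rw [Finset.mul_sum, ← Finset.sum_sub_distrib, ← Finset.sum_add_distrib]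

lemma D1_smul (L : ℝ) (c : ℂ) (f : GridFn K) (m) :
    D1 K L (fun m' => c * f m') m = c * D1 K L f m := by
  rw [D1_apply, D1_apply, Finset.mul_sum]
  refine Finset.sum_congr rfl fun r _ => ?_
  rw [dft_smul]
  ring

lemma D2_smul (L : ℝ) (c : ℂ) (f : GridFn K) (m) :
    D2 K L (fun m' => c * f m') m = c * D2 K L f m := by
  rw [D2_apply, D2_apply, Finset.mul_sum]
  refine Finset.sum_congr rfl fun r _ => ?_
  rw [dft_smul]
  ring

lemma ipN_smul_right_real (L : ℝ) (u v : GridFn K) (x : ℝ) :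
    ipN K L u (fun m => (x:ℂ) * v m) = (x:ℂ) * ipN K L u v := by
  have h : (∑ s, u s * (starRingEnd ℂ) ((x:ℂ) * v s))
      = (x:ℂ) * ∑ s, u s * (starRingEnd ℂ) (v s) := by
    rw [Finset.mul_sum]
    refine Finset.sum_congr rfl fun s _ => ?_
    rw [map_mul, Complex.conj_ofReal]
    ring
  simp only [ipN]
  rw [h]
  ring

lemma re_div_two (z : ℂ) : (z / 2).re = z.re / 2 := by
  rw [show z / 2 = ((2⁻¹:ℝ):ℂ) * z from by push_cast; ring, Complex.re_ofReal_mul]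
  ring

lemma im_div_two (z : ℂ) : (z / 2).im = z.im / 2 := by
  rw [show z / 2 = ((2⁻¹:ℝ):ℂ) * z from by push_cast; ring, Complex.im_ofReal_mul]
  ring

lemma realValued_muN (L ε : ℝ) (φ : GridFn K) (hφ : RealValued φ) :
    RealValued (muN K L ε φ) := by
  intro m
  have h1 : φ m = (((φ m).re : ℝ) : ℂ) := Complex.ext rfl (by rw [hφ m]; simp)
  have im1 : (φ m ^ 3).im = 0 := by rw [h1]; simp [← Complex.ofReal_pow]
  have im2 : (((1-ε:ℝ):ℂ) * φ m).im = 0 := by rw [Complex.im_ofReal_mul, hφ m, mul_zero]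
  have imlap : (lapN K L φ m).im = 0 := by
    show (-(specOp K L 1 φ m)).im = 0
    rw [Complex.neg_im, specOp_real L 1 φ hφ m, neg_zero]
  have im3 : ((2:ℂ) * lapN K L φ m).im = 0 := by
    rw [show ((2:ℂ)) = (((2:ℝ)):ℂ) from by norm_num, Complex.im_ofReal_mul, imlap, mul_zero]
  have im4 : (bilapN K L φ m).im = 0 := specOp_real L 2 φ hφ m
  simp only [muN]
  rw [Complex.add_im, Complex.add_im, Complex.add_im, im1, im2, im3, im4]
  ring

/-- Derivative data for the energy term. -/
lemma EN_deriv (L ε : ℝ) (φ u : GridFn K) (hφ : RealValued φ) (hu : RealValued u) :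
    ∃ B C2 C3 C4 : ℝ, (∀ s : ℝ, EN K L ε (fun m => φ m + (s:ℂ) * (u m / 2))
        = EN K L ε φ + s * B + s^2 * C2 + s^3 * C3 + s^4 * C4)
      ∧ 2 * B = (ipN K L (muN K L ε φ) u).re := by
  obtain ⟨C2, C3, C4, hEN⟩ := EN_expand L ε φ (fun m => u m / 2)
  refine ⟨_, _, _, _, hEN, ?_⟩
  have hD1 : ∀ m, D1 K L (fun m' => u m' / 2) m = D1 K L u m / 2 := by
    intro m
    rw [show (fun m' => u m' / 2) = (fun m' => ((2:ℂ))⁻¹ * u m') from funext fun m' => by ring,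
      D1_smul]
    ring
  have hD2 : ∀ m, D2 K L (fun m' => u m' / 2) m = D2 K L u m / 2 := by
    intro m
    rw [show (fun m' => u m' / 2) = (fun m' => ((2:ℂ))⁻¹ * u m') from funext fun m' => by ring,
      D2_smul]
    ring
  have hS1 : ∀ m, specOp K L 1 (fun m' => u m' / 2) m = specOp K L 1 u m / 2 := by
    intro m
    rw [show (fun m' => u m' / 2) = (fun m' => ((2:ℂ))⁻¹ * u m') from funext fun m' => by ring,
      specOp_smul]
    ring
  have hpt : ∀ m : Fin (2*K+1) × Fin (2*K+1),
      ((φ m).re^3 * ((u m / 2)).re + (1-ε) * ((φ m).re * ((u m / 2)).re)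
        - 2*((D1 K L φ m).re*(D1 K L (fun m' => u m' / 2) m).re
             + (D1 K L φ m).im*(D1 K L (fun m' => u m' / 2) m).im
             + (D2 K L φ m).re*(D2 K L (fun m' => u m' / 2) m).re
             + (D2 K L φ m).im*(D2 K L (fun m' => u m' / 2) m).im)
        + ((specOp K L 1 φ m).re*(specOp K L 1 (fun m' => u m' / 2) m).re
           + (specOp K L 1 φ m).im*(specOp K L 1 (fun m' => u m' / 2) m).im))
      = (1/2) * ((φ m).re^3 * (u m).re + (1-ε) * ((φ m).re * (u m).re)
        - 2*((D1 K L φ m).re*(D1 K L u m).re + (D1 K L φ m).im*(D1 K L u m).im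
             + (D2 K L φ m).re*(D2 K L u m).re + (D2 K L φ m).im*(D2 K L u m).im)
        + ((specOp K L 1 φ m).re*(specOp K L 1 u m).re
           + (specOp K L 1 φ m).im*(specOp K L 1 u m).im)) := by
    intro m
    rw [hD1 m, hD2 m, hS1 m, re_div_two, re_div_two, im_div_two, re_div_two, im_div_two,
      re_div_two, im_div_two]
    ring
  rw [Finset.sum_congr rfl (fun m _ => hpt m), ← Finset.mul_sum,
    first_variation_EN L ε φ u hφ hu]
  simp only [ipN]
  rw [Complex.re_ofReal_mul]
  ring

/-- Derivative data for the `H^{-1}` term. -/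
lemma negNorm_deriv (L : ℝ) (a : ℝ) (X w : GridFn K) :
    ∃ A0 B1 Cq : ℝ, (∀ s : ℝ,
      (ipN K L (invNegLapN K L (fun m => (a:ℂ) * X m + (s:ℂ) * ((a:ℂ) * w m)))
        (fun m => (a:ℂ) * X m + (s:ℂ) * ((a:ℂ) * w m))).re = A0 + s * B1 + s^2 * Cq)
      ∧ B1 = 2 * (a * a) * (ipN K L (invNegLapN K L X) w).re := by
  have hinv : ∀ s : ℝ, invNegLapN K L (fun m => (a:ℂ) * X m + (s:ℂ) * ((a:ℂ) * w m))
      = fun m => invNegLapN K L (fun m' => (a:ℂ) * X m') m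
        + (s:ℂ) * invNegLapN K L (fun m' => (a:ℂ) * w m') m := by
    intro s
    funext m
    exact specOp_add_mul L (-1) (fun m' => (a:ℂ) * X m') (fun m' => (a:ℂ) * w m') (s:ℂ) m
  refine ⟨(ipN K L (invNegLapN K L (fun m' => (a:ℂ) * X m')) (fun m' => (a:ℂ) * X m')).re,
    (ipN K L (invNegLapN K L (fun m' => (a:ℂ) * w m')) (fun m' => (a:ℂ) * X m')).re
      + (ipN K L (invNegLapN K L (fun m' => (a:ℂ) * X m')) (fun m' => (a:ℂ) * w m')).re,
    (ipN K L (invNegLapN K L (fun m' => (a:ℂ) * w m')) (fun m' => (a:ℂ) * w m')).re,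
    fun s => ?_, ?_⟩
  · rw [hinv s]
    exact ipN_re_poly L _ _ _ _ s
  · have hw' : invNegLapN K L (fun m' => (a:ℂ) * w m') = fun m => (a:ℂ) * invNegLapN K L w m := by
      funext m
      exact specOp_smul L (-1) (a:ℂ) w m
    have hX' : invNegLapN K L (fun m' => (a:ℂ) * X m') = fun m => (a:ℂ) * invNegLapN K L X m := by
      funext m
      exact specOp_smul L (-1) (a:ℂ) X m
    have hsymm : (ipN K L (invNegLapN K L w) X).re = (ipN K L (invNegLapN K L X) w).re := by
      simp only [ipN, invNegLapN]
      rw [Complex.re_ofReal_mul, Complex.re_ofReal_mul, invlap_symm_re]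
    rw [hw', hX', ipN_smul_left, ipN_smul_right_real, ipN_smul_left, ipN_smul_right_real,
      ← mul_assoc, ← mul_assoc]
    rw [show ((a:ℝ):ℂ) * (a:ℂ) = (((a*a : ℝ)):ℂ) from by push_cast; ring,
      Complex.re_ofReal_mul, Complex.re_ofReal_mul, hsymm]
    ring
end PFC

open PFC

/-- `v` solves the fully discrete midpoint-rule PFC equation
`(v − u¹)/dt = M Δ_N(μ_N((v + u¹)/2))` if and only if `v` is a critical point of the
midpoint objective `G_N` along mass-conserving (zero-mean) directions. -/
theorem mp_pfc_iff_critical_point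
    (K : ℕ) (hK : 1 ≤ K) (L : ℝ) (hL : 0 < L) (ε : ℝ) (M : ℝ) (hM : 0 < M)
    (dt : ℝ) (hdt : 0 < dt) (a : ℝ) (ha : a = 1 / dt) (u1 v : GridFn K)
    (hu1 : RealValued u1) (hv : RealValued v)
    (hmass : (∑ s, v s) = ∑ s, u1 s) :
    (∀ m, (v m - u1 m) / (dt : ℂ)
        = (M : ℂ) * lapN K L (muN K L ε (fun m' => (v m' + u1 m') / 2)) m) ↔
    (∀ w : GridFn K, RealValued w → ZeroMean w →
      HasDerivAt (fun s : ℝ => GNmp K L ε M a u1 (fun m => v m + (s : ℂ) * w m)) 0 0) := by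
  classical
  set φ : GridFn K := fun m' => (v m' + u1 m') / 2 with hφdef
  set X : GridFn K := fun m' => v m' - u1 m' with hXdef
  have hdtC : (dt:ℂ) ≠ 0 := by exact_mod_cast ne_of_gt hdt
  have haz : a ≠ 0 := by rw [ha]; exact one_div_ne_zero (ne_of_gt hdt)
  have hMz : M ≠ 0 := ne_of_gt hM
  have hφreal : RealValued φ := by
    intro m
    rw [hφdef]
    simp [Complex.div_im, Complex.add_im, Complex.add_re, hv m, hu1 m]
  have hXreal : RealValued X := by
    intro m
    rw [hXdef]
    simp [Complex.sub_im, hv m, hu1 m]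
  have hXsum : (∑ s, X s) = 0 := by
    simp only [hXdef]
    rw [Finset.sum_sub_distrib, hmass, sub_self]
  have hdftX0 : dft K X (0, 0) = 0 := by
    rw [dft_zero_freq, hXsum, mul_zero]
  -- the derivative of the objective along direction w
  have hderiv : ∀ w : GridFn K, RealValued w → ZeroMean w →
      HasDerivAt (fun s : ℝ => GNmp K L ε M a u1 (fun m => v m + (s : ℂ) * w m))
        ((a/M) * (ipN K L (invNegLapN K L X) w).re + (ipN K L (muN K L ε φ) w).re) 0 := by
    intro w hw _
    obtain ⟨B, C2, C3, C4, hEN, hB⟩ := EN_deriv L ε φ w hφreal hw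
    obtain ⟨A0, B1, Cq, hNN, hB1⟩ := negNorm_deriv L a X w
    have hfun : (fun s : ℝ => GNmp K L ε M a u1 (fun m => v m + (s : ℂ) * w m))
        = fun s : ℝ => ((1/(2*M*a)) * A0 + 2 * EN K L ε φ)
            + s * ((1/(2*M*a)) * B1 + 2 * B)
            + s^2 * ((1/(2*M*a)) * Cq + 2 * C2)
            + s^3 * (2 * C3) + s^4 * (2 * C4) := by
      funext s
      have harg1 : (fun m => (a:ℂ) * (v m + (s:ℂ) * w m) - (a:ℂ) * u1 m)
          = (fun m => (a:ℂ) * X m + (s:ℂ) * ((a:ℂ) * w m)) := by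
        funext m
        simp only [hXdef]
        ring
      have harg2 : (fun m => ((v m + (s:ℂ) * w m) + u1 m) / 2)
          = (fun m => φ m + (s:ℂ) * (w m / 2)) := by
        funext m
        simp only [hφdef]
        ring
      simp only [GNmp, negNormSq]
      rw [harg1, harg2, hNN s, hEN s]
      ring
    have hDval : (1/(2*M*a)) * B1 + 2 * B
        = (a/M) * (ipN K L (invNegLapN K L X) w).re + (ipN K L (muN K L ε φ) w).re := by
      rw [hB1, hB]
      field_simp
    rw [hfun, ← hDval]
    exact hasDerivAt_poly4 _ _ _ _ _
  constructor
  · -- PDE implies critical point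
    intro hPDE w hw hzm
    have hd := hderiv w hw hzm
    have hXfun : X = fun m' => ((-(M * dt) : ℝ):ℂ) * specOp K L 1 (muN K L ε φ) m' := by
      funext m'
      have h := hPDE m'
      rw [div_eq_iff hdtC] at h
      rw [hXdef]
      simp only []
      rw [h]
      simp only [lapN]
      push_cast
      ring
    have hinvX : ∀ m', invNegLapN K L X m'
        = ((-(M*dt):ℝ):ℂ) * (muN K L ε φ m' - dft K (muN K L ε φ) (0,0)) := by
      intro m'
      conv_lhs => rw [hXfun]
      rw [show invNegLapN K L (fun m'' => ((-(M*dt):ℝ):ℂ) * specOp K L 1 (muN K L ε φ) m'') m'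
          = ((-(M*dt):ℝ):ℂ) * invNegLapN K L (specOp K L 1 (muN K L ε φ)) m' from
        specOp_smul L (-1) _ _ m']
      congr 1
      have hc := specOp_cancel (K := K) hL (show (-1:ℤ) ≠ 0 by norm_num) (muN K L ε φ) m'
      rw [show (-(-1:ℤ)) = (1:ℤ) from by norm_num] at hc
      exact hc
    have hip : (ipN K L (invNegLapN K L X) w).re
        = -(M*dt) * (ipN K L (muN K L ε φ) w).re := by
      have h1 : invNegLapN K L X
          = fun m' => ((-(M*dt):ℝ):ℂ)
              * ((fun m'' => muN K L ε φ m'' - dft K (muN K L ε φ) (0,0)) m') :=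
        funext fun m' => hinvX m'
      rw [h1, ipN_smul_left]
      have h2 : (fun m'' => muN K L ε φ m'' - dft K (muN K L ε φ) (0,0))
          = fun m'' => muN K L ε φ m''
              + (-(dft K (muN K L ε φ) (0,0))) * ((fun _ => (1:ℂ)) m'') := by
        funext m''
        simp only []
        ring
      rw [h2, ipN_add_mul_left, ipN_const_left_zero L 1 w hzm, mul_zero, add_zero,
        Complex.re_ofReal_mul]
    have hz : (a/M) * (ipN K L (invNegLapN K L X) w).re + (ipN K L (muN K L ε φ) w).re = 0 := by
      rw [hip, ha]
      field_simp
      ring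
    rwa [hz] at hd
  · -- critical point implies PDE
    intro hcrit m
    set G : GridFn K := fun m' => muN K L ε φ m' + ((a/M:ℝ):ℂ) * invNegLapN K L X m' with hGdef
    have hGreal : RealValued G := by
      intro m'
      rw [hGdef]
      simp only [Complex.add_im, Complex.im_ofReal_mul]
      rw [realValued_muN L ε φ hφreal m']
      have : (invNegLapN K L X m').im = 0 := specOp_real L (-1) X hXreal m'
      rw [this]
      ring
    have hEww : ∀ w : GridFn K, RealValued w → ZeroMean w → (ipN K L G w).re = 0 := by
      intro w hw hzm
      have hd := hderiv w hw hzm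
      have h0 := hcrit w hw hzm
      have hu := hd.unique h0
      have h1 : ipN K L G w
          = ipN K L (muN K L ε φ) w + ((a/M:ℝ):ℂ) * ipN K L (invNegLapN K L X) w := by
        rw [hGdef]
        exact ipN_add_mul_left L (muN K L ε φ) (invNegLapN K L X) w ((a/M:ℝ):ℂ)
      rw [h1, Complex.add_re, Complex.re_ofReal_mul]
      linarith [hu]
    have m0 : Fin (2*K+1) × Fin (2*K+1) := ⟨⟨0, by omega⟩, ⟨0, by omega⟩⟩
    have hconst : ∀ m1 m2 : Fin (2*K+1) × Fin (2*K+1), G m1 = G m2 := by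
      intro m1 m2
      by_cases hm : m1 = m2
      · rw [hm]
      set w : GridFn K := fun m' => (if m' = m1 then (1:ℂ) else 0)
          - (if m' = m2 then (1:ℂ) else 0) with hwdef
      have hw : RealValued w := by
        intro m'
        simp only [hwdef]
        split_ifs <;> simp
      have hzm : ZeroMean w := by
        unfold ZeroMean
        simp only [hwdef]
        rw [Finset.sum_sub_distrib]
        simp [Finset.sum_ite_eq']
      have h := hEww w hw hzm
      have hptw : ∀ s_ : Fin (2*K+1) × Fin (2*K+1), G s_ * (starRingEnd ℂ) (w s_)
          = (if s_ = m1 then G s_ else 0) - (if s_ = m2 then G s_ else 0) := by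
        intro s_
        simp only [hwdef]
        split_ifs <;> simp
      have hip2 : ipN K L G w = (((L/(2*(K:ℝ)+1))^2 : ℝ):ℂ) * (G m1 - G m2) := by
        simp only [ipN]
        congr 1
        rw [Finset.sum_congr rfl (fun s_ _ => hptw s_), Finset.sum_sub_distrib]
        simp [Finset.sum_ite_eq']
      rw [hip2, Complex.re_ofReal_mul] at h
      have hh2 : (L/(2*(K:ℝ)+1))^2 ≠ 0 := by positivity
      have hre : (G m1 - G m2).re = 0 := (mul_eq_zero.mp h).resolve_left hh2
      have him : (G m1 - G m2).im = 0 := by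
        rw [Complex.sub_im, hGreal m1, hGreal m2]
        ring
      have : G m1 - G m2 = 0 := Complex.ext (by rw [hre]; simp) (by rw [him]; simp)
      exact sub_eq_zero.mp this
    have hGfun : G = fun _ => G m0 := funext fun m' => hconst m' m0
    have hS0 : specOp K L 1 G m = 0 := by
      rw [hGfun]
      exact specOp_const L 1 (G m0) m
    have hexp : specOp K L 1 G m
        = specOp K L 1 (muN K L ε φ) m + ((a/M:ℝ):ℂ) * X m := by
      conv_lhs => rw [hGdef]
      rw [specOp_add_mul L 1 (muN K L ε φ) (invNegLapN K L X) ((a/M:ℝ):ℂ) m]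
      congr 1
      have hc2 : specOp K L 1 (invNegLapN K L X) m = X m := by
        have hc := specOp_cancel (K := K) hL (show (1:ℤ) ≠ 0 by norm_num) X m
        rw [hdftX0, sub_zero] at hc
        exact hc
      rw [hc2]
    have hS1eq : specOp K L 1 (muN K L ε φ) m = -(((a/M:ℝ):ℂ) * X m) := by
      have h9 : specOp K L 1 (muN K L ε φ) m + ((a/M:ℝ):ℂ) * X m = 0 := by
        rw [← hexp, hS0]
      linear_combination h9
    have hXm : v m - u1 m = X m := by rw [hXdef]
    have hMC : (M:ℂ) ≠ 0 := by exact_mod_cast hMz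
    rw [hXm, div_eq_iff hdtC]
    simp only [lapN]
    rw [hS1eq, ha]
    push_cast
    field_simp
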